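/- arXiv:1711.04541 — 2 statements merged into one kernel-verified Lean document; each statement's English description precedes it below -/
import Mathlib

section
/- Let w₁ < w₂ and u₁ ≤ u₂, R = [u₁, u₂] × [w₁, w₂]. Let a, b : R → ℝ be continuous with a(u, w) > 0 and b(u, w) > 0 for all (u, w) ∈ R. Then there exist a real number γ and a continuously differentiable function U : [w₁, w₂] → ℝ with u₁ ≤ U(w) ≤ u₂ for all w ∈ [w₁, w₂], U(w₁) = u₁, U(w₂) = u₂, and U'(w) = γ · b(U(w), w) / a(U(w), w) for every w ∈ [w₁, w₂]. -/
open Set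


open Set Metric

/-- On a compact metric space, every continuous real function is uniformly
approximable by Lipschitz functions. -/
lemma lip_dense {X : Type*} [MetricSpace X] [CompactSpace X] (f : X → ℝ) (hf : Continuous f)
    {ε : ℝ} (hε : 0 < ε) : ∃ (K : NNReal) (g : X → ℝ), LipschitzWith K g ∧ ∀ x, |g x - f x| ≤ ε := by
  classical
  -- the subalgebra of Lipschitz functions
  let A : Subalgebra ℝ C(X, ℝ) :=
    { carrier := {g | ∃ K : NNReal, LipschitzWith K (g : X → ℝ)}
      mul_mem' := by
        rintro p q ⟨Kp, hp⟩ ⟨Kq, hq⟩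
        refine ⟨‖p‖₊ * Kq + ‖q‖₊ * Kp, LipschitzWith.of_dist_le_mul fun x y => ?_⟩
        have h1 : dist ((p * q) x) ((p * q) y)
            ≤ |p x| * dist (q x) (q y) + |q y| * dist (p x) (p y) := by
          simp only [ContinuousMap.mul_apply, Real.dist_eq]
          have : p x * q x - p y * q y = p x * (q x - q y) + q y * (p x - p y) := by ring
          rw [this]
          refine (abs_add_le _ _).trans ?_
          simp [abs_mul, le_refl]
        have h2 : |p x| ≤ ‖p‖ := by
          simpa [Real.norm_eq_abs] using p.norm_coe_le_norm x
        have h3 : |q y| ≤ ‖q‖ := by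
          simpa [Real.norm_eq_abs] using q.norm_coe_le_norm y
        refine h1.trans ?_
        have h4 : |p x| * dist (q x) (q y) ≤ ‖p‖ * (Kq * dist x y) :=
          mul_le_mul h2 (hq.dist_le_mul x y) dist_nonneg (norm_nonneg _)
        have h5 : |q y| * dist (p x) (p y) ≤ ‖q‖ * (Kp * dist x y) :=
          mul_le_mul h3 (hp.dist_le_mul x y) dist_nonneg (norm_nonneg _)
        calc |p x| * dist (q x) (q y) + |q y| * dist (p x) (p y)
            ≤ ‖p‖ * (Kq * dist x y) + ‖q‖ * (Kp * dist x y) := add_le_add h4 h5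
          _ = ((‖p‖₊ * Kq + ‖q‖₊ * Kp : NNReal) : ℝ) * dist x y := by
              push_cast [coe_nnnorm]
              ring
      one_mem' := ⟨0, by simpa using LipschitzWith.const (1 : ℝ)⟩
      add_mem' := by
        rintro p q ⟨Kp, hp⟩ ⟨Kq, hq⟩
        exact ⟨Kp + Kq, hp.add hq⟩
      zero_mem' := ⟨0, by simpa using LipschitzWith.const (0 : ℝ)⟩
      algebraMap_mem' := fun c => ⟨0, by simpa using LipschitzWith.const c⟩ }
  have hsep : A.SeparatesPoints := by
    intro x y hxy
    have hlip : LipschitzWith 1 (fun z : X => dist z y) :=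
      LipschitzWith.of_dist_le_mul fun c d => by
        simpa [Real.dist_eq] using abs_dist_sub_le c d y
    refine ⟨fun z => dist z y, ⟨⟨fun z => dist z y, hlip.continuous⟩, ⟨1, hlip⟩, rfl⟩, ?_⟩
    simpa using dist_ne_zero.2 hxy
  obtain ⟨g, hg⟩ :=
    ContinuousMap.exists_mem_subalgebra_near_continuous_of_separatesPoints A hsep f hf ε hε
  obtain ⟨K, hK⟩ := g.2
  exact ⟨K, (g : C(X, ℝ)), hK, fun x => by
    have := hg x
    rw [Real.norm_eq_abs] at this
    exact this.le⟩

open Set Metric Real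

lemma solve_lipschitz (w₁ w₂ u₁ u₂ : ℝ) (hw : w₁ < w₂) (hu : u₁ < u₂)
    (G : ℝ → ℝ → ℝ) (K : NNReal) (m' M' : ℝ) (hm' : 0 < m')
    (hGlip : ∀ w, LipschitzWith K (G w))
    (hGcont : ∀ u, Continuous fun w => G w u)
    (hGlb : ∀ w u, m' ≤ G w u) (hGub : ∀ w u, G w u ≤ M') :
    ∃ γ U, 0 ≤ γ ∧ γ ≤ (u₂ - u₁) / (m' * (w₂ - w₁)) ∧
      U w₁ = u₁ ∧ U w₂ = u₂ ∧ MonotoneOn U (Icc w₁ w₂) ∧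
      ∀ w ∈ Icc w₁ w₂, HasDerivWithinAt U (γ * G w (U w)) (Icc w₁ w₂) w := by
  have hM' : 0 < M' := hm'.trans_le ((hGlb w₁ u₁).trans (hGub w₁ u₁))
  set Γ : ℝ := (u₂ - u₁) / (m' * (w₂ - w₁)) with hΓdef
  have hΓpos : 0 < Γ := by
    exact div_pos (by linarith) (mul_pos hm' (by linarith))
  -- scaled Lipschitz bound
  have hlip' : ∀ (c : ℝ) (hc : 0 ≤ c) (t : ℝ),
      LipschitzWith (⟨c, hc⟩ * K) (fun x => c * G t x) := by
    intro c hc t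
    refine LipschitzWith.of_dist_le_mul fun x y => ?_
    have h1 := (hGlip t).dist_le_mul x y
    calc dist (c * G t x) (c * G t y) = c * dist (G t x) (G t y) := by
          rw [Real.dist_eq, Real.dist_eq, ← mul_sub, abs_mul, abs_of_nonneg hc]
      _ ≤ c * ((K : ℝ) * dist x y) := mul_le_mul_of_nonneg_left h1 hc
      _ = ((⟨c, hc⟩ * K : NNReal) : ℝ) * dist x y := by change c * ((K : ℝ) * dist x y) = (c * (K : ℝ)) * dist x y; ring
  -- existence of a solution for each γ ∈ [0, Γ]
  have hsol : ∀ γ, γ ∈ Icc (0:ℝ) Γ → ∃ U : ℝ → ℝ, U w₁ = u₁ ∧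
      ∀ w ∈ Icc w₁ w₂, HasDerivWithinAt U (γ * G w (U w)) (Icc w₁ w₂) w := by
    intro γ hγ
    have hpl : IsPicardLindelof (fun t x => γ * G t x) (⟨w₁, left_mem_Icc.2 hw.le⟩ : Icc w₁ w₂) u₁
        (Γ * M' * (w₂ - w₁)).toNNReal 0 (Γ * M').toNNReal (⟨γ, hγ.1⟩ * K) := by
      constructor
      · exact fun t _ => ((hlip' γ hγ.1 t).lipschitzOnWith)
      · exact fun x _ => (continuous_const.mul (hGcont x)).continuousOn
      · intro t _ x _
        rw [Real.coe_toNNReal _ (mul_nonneg hΓpos.le hM'.le)]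
        rw [Real.norm_eq_abs, abs_mul, abs_of_nonneg hγ.1,
          abs_of_pos (hm'.trans_le (hGlb t x))]
        exact mul_le_mul hγ.2 (hGub t x) (hm'.le.trans (hGlb t x)) hΓpos.le
      · have hnn : 0 ≤ Γ * M' * (w₂ - w₁) :=
          mul_nonneg (mul_nonneg hΓpos.le hM'.le) (by linarith)
        simp only [tsub_zero, Real.coe_toNNReal _ hnn,
          Real.coe_toNNReal _ (mul_nonneg hΓpos.le hM'.le)]
        rw [sub_self, max_eq_left (by linarith : (0:ℝ) ≤ w₂ - w₁)]
        rw [NNReal.coe_zero, sub_zero]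
    exact hpl.exists_eq_forall_mem_Icc_hasDerivWithinAt₀
  choose! Usel hU₁ hUderiv using hsol
  -- basic consequences
  have hcontOn : ∀ γ ∈ Icc (0:ℝ) Γ, ContinuousOn (Usel γ) (Icc w₁ w₂) :=
    fun γ hγ w hw' => (hUderiv γ hγ w hw').continuousWithinAt
  have hIci : ∀ γ ∈ Icc (0:ℝ) Γ, ∀ t ∈ Ico w₁ w₂,
      HasDerivWithinAt (Usel γ) (γ * G t (Usel γ t)) (Ici t) t :=
    fun γ hγ t ht => (hUderiv γ hγ t (Ico_subset_Icc_self ht)).mono_of_mem_nhdsWithin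
      (Icc_mem_nhdsGE_of_mem ht)
  have hupper : ∀ γ ∈ Icc (0:ℝ) Γ, ∀ w ∈ Icc w₁ w₂, Usel γ w - u₁ ≤ γ * M' * (w - w₁) := by
    intro γ hγ w hw'
    have := norm_image_sub_le_of_norm_deriv_le_segment'
      (f := Usel γ) (f' := fun t => γ * G t (Usel γ t)) (C := γ * M')
      (hUderiv γ hγ) (fun t _ => by
        rw [Real.norm_eq_abs, abs_mul, abs_of_nonneg hγ.1,
          abs_of_pos (hm'.trans_le (hGlb t _))]
        exact mul_le_mul_of_nonneg_left (hGub t _) hγ.1) w hw'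
    rw [hU₁ γ hγ, Real.norm_eq_abs] at this
    exact (le_abs_self _).trans this
  have hlower : ∀ γ ∈ Icc (0:ℝ) Γ, ∀ w ∈ Icc w₁ w₂, γ * m' * (w - w₁) ≤ Usel γ w - u₁ := by
    intro γ hγ w hw'
    have hmono : MonotoneOn (fun w => Usel γ w - γ * m' * w) (Icc w₁ w₂) := by
      apply monotoneOn_of_hasDerivWithinAt_nonneg (f' := fun w => γ * G w (Usel γ w) - γ * m')
        (convex_Icc _ _)
        ((hcontOn γ hγ).sub (continuous_const.mul continuous_id).continuousOn)
      · intro x hx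
        rw [interior_Icc] at hx ⊢
        exact ((hUderiv γ hγ x (Ioo_subset_Icc_self hx)).mono Ioo_subset_Icc_self).sub
          (((hasDerivAt_id x).const_mul (γ * m')).hasDerivWithinAt.congr_deriv (mul_one _))
      · intro x hx
        have := mul_le_mul_of_nonneg_left (hGlb x (Usel γ x)) hγ.1
        linarith
    have h2 := hmono (left_mem_Icc.2 hw.le) hw' hw'.1
    simp only at h2
    rw [hU₁ γ hγ] at h2
    linarith
  have hmonoU : ∀ γ ∈ Icc (0:ℝ) Γ, MonotoneOn (Usel γ) (Icc w₁ w₂) := by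
    intro γ hγ
    apply monotoneOn_of_hasDerivWithinAt_nonneg (f' := fun w => γ * G w (Usel γ w))
      (convex_Icc _ _) (hcontOn γ hγ)
    · intro x hx
      rw [interior_Icc] at hx ⊢
      exact (hUderiv γ hγ x (Ioo_subset_Icc_self hx)).mono Ioo_subset_Icc_self
    · intro x _
      exact mul_nonneg hγ.1 (hm'.le.trans (hGlb _ _))
  -- value at 0 and Γ
  have hφ0 : Usel 0 w₂ = u₁ := by
    have h1 := hupper 0 ⟨le_refl _, hΓpos.le⟩ w₂ (right_mem_Icc.2 hw.le)
    have h2 := hlower 0 ⟨le_refl _, hΓpos.le⟩ w₂ (right_mem_Icc.2 hw.le)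
    simp only [zero_mul] at h1 h2
    linarith
  have hφΓ : u₂ ≤ Usel Γ w₂ := by
    have h2 := hlower Γ ⟨hΓpos.le, le_refl _⟩ w₂ (right_mem_Icc.2 hw.le)
    have hne : m' * (w₂ - w₁) ≠ 0 := ne_of_gt (mul_pos hm' (by linarith))
    have : Γ * m' * (w₂ - w₁) = u₂ - u₁ := by
      rw [hΓdef, mul_assoc, div_mul_cancel₀ _ hne]
    linarith
  -- continuity of the shooting map via Grönwall
  set Kr : ℝ := ((Γ.toNNReal * K : NNReal) : ℝ) with hKr
  have hgron : ∀ γ ∈ Icc (0:ℝ) Γ, ∀ γ' ∈ Icc (0:ℝ) Γ,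
      dist (Usel γ w₂) (Usel γ' w₂)
        ≤ gronwallBound 0 Kr (0 + |γ' - γ| * M') (w₂ - w₁) := by
    intro γ hγ γ' hγ'
    have hweak : ∀ c ∈ Icc (0:ℝ) Γ, ∀ t, LipschitzWith (Γ.toNNReal * K)
        (fun x => c * G t x) := by
      intro c hc t
      refine (hlip' c hc.1 t).weaken (mul_le_mul_left ?_ K)
      change c ≤ ((Γ.toNNReal : NNReal) : ℝ); rw [Real.coe_toNNReal _ hΓpos.le]
      exact hc.2
    have := dist_le_of_approx_trajectories_ODE (v := fun t x => γ * G t x)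
      (K := Γ.toNNReal * K) (f := Usel γ) (g := Usel γ')
      (f' := fun t => γ * G t (Usel γ t)) (g' := fun t => γ' * G t (Usel γ' t))
      (εf := 0) (εg := |γ' - γ| * M') (δ := 0) (a := w₁) (b := w₂)
      (fun t => hweak γ hγ t)
      (hcontOn γ hγ) (hIci γ hγ) (fun t _ => by simp)
      (hcontOn γ' hγ') (hIci γ' hγ')
      (fun t ht => by
        rw [Real.dist_eq, ← sub_mul, abs_mul]
        refine mul_le_mul_of_nonneg_left ?_ (abs_nonneg _)
        rw [abs_of_pos (hm'.trans_le (hGlb t _))]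
        exact hGub t _)
      (by rw [hU₁ γ hγ, hU₁ γ' hγ', dist_self])
    exact this w₂ (right_mem_Icc.2 hw.le)
  have hgblin : ∀ c ε : ℝ, gronwallBound 0 Kr (c * ε) (w₂ - w₁)
      = c * gronwallBound 0 Kr ε (w₂ - w₁) := by
    intro c ε
    rcases eq_or_ne Kr 0 with h | h
    · rw [h, gronwallBound_K0, gronwallBound_K0]; ring
    · rw [gronwallBound_of_K_ne_0 h, gronwallBound_of_K_ne_0 h]; ring
  set B : ℝ := gronwallBound 0 Kr M' (w₂ - w₁) with hB
  have hBnn : 0 ≤ B := by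
    rcases eq_or_ne Kr 0 with h | h
    · rw [hB, h, gronwallBound_K0]
      simp only [zero_add]
      exact mul_nonneg hM'.le (by linarith)
    · rw [hB, gronwallBound_of_K_ne_0 h]
      have hKrpos : 0 ≤ Kr := NNReal.coe_nonneg _
      have h1 : 1 ≤ Real.exp (Kr * (w₂ - w₁)) := by
        rw [← Real.exp_zero]
        exact Real.exp_le_exp.2 (mul_nonneg hKrpos (by linarith))
      have h2 : 0 ≤ M' / Kr * (Real.exp (Kr * (w₂ - w₁)) - 1) :=
        mul_nonneg (div_nonneg hM'.le hKrpos) (by linarith)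
      linarith
  have hφcont : ContinuousOn (fun γ => Usel γ w₂) (Icc (0:ℝ) Γ) := by
    apply LipschitzOnWith.continuousOn (K := B.toNNReal)
    apply LipschitzOnWith.of_dist_le_mul
    intro γ hγ γ' hγ'
    have := hgron γ' hγ' γ hγ
    rw [dist_comm] at this
    calc dist (Usel γ w₂) (Usel γ' w₂)
        ≤ gronwallBound 0 Kr (0 + |γ - γ'| * M') (w₂ - w₁) := this
      _ = |γ - γ'| * B := by rw [zero_add, hgblin]
      _ = (B.toNNReal : ℝ) * dist γ γ' := by
          rw [Real.coe_toNNReal _ hBnn, Real.dist_eq]; ring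
  -- intermediate value
  have hmem : u₂ ∈ Icc ((fun γ => Usel γ w₂) 0) ((fun γ => Usel γ w₂) Γ) := by
    constructor
    · simp only [hφ0]; exact hu.le
    · exact hφΓ
  obtain ⟨γs, hγsmem, hγseq⟩ := intermediate_value_Icc hΓpos.le hφcont hmem
  exact ⟨γs, Usel γs, hγsmem.1, hγsmem.2, hU₁ γs hγsmem, hγseq,
    hmonoU γs hγsmem, hUderiv γs hγsmem⟩

open Set Metric

lemma compact_S {α : Type*} [MetricSpace α] [CompactSpace α] (u₁ u₂ : ℝ) (L : NNReal) :
    IsCompact {g : C(α, ℝ) | LipschitzWith L g ∧ ∀ x, g x ∈ Icc u₁ u₂} := by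
  set S : Set C(α, ℝ) := {g | LipschitzWith L g ∧ ∀ x, g x ∈ Icc u₁ u₂} with hS
  apply ArzelaAscoli.isCompact_of_equicontinuous
  · have himg : ContinuousMap.toFun '' S
        = {h : α → ℝ | LipschitzWith L h ∧ ∀ x, h x ∈ Icc u₁ u₂} := by
      ext h
      constructor
      · rintro ⟨g, hg, rfl⟩; exact hg
      · rintro ⟨h1, h2⟩
        exact ⟨⟨h, h1.continuous⟩, ⟨h1, h2⟩, rfl⟩
    rw [himg]
    have hsub : {h : α → ℝ | LipschitzWith L h ∧ ∀ x, h x ∈ Icc u₁ u₂}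
        ⊆ Set.pi univ (fun _ : α => Icc u₁ u₂) := by
      intro h hh x _
      exact hh.2 x
    have h2closed : IsClosed {h : α → ℝ | ∀ x, h x ∈ Icc u₁ u₂} := by
      have he : {h : α → ℝ | ∀ x, h x ∈ Icc u₁ u₂}
          = ⋂ x, {h : α → ℝ | h x ∈ Icc u₁ u₂} := by ext; simp
      rw [he]
      exact isClosed_iInter fun x => IsClosed.preimage (continuous_apply x) isClosed_Icc
    have hclosed : IsClosed {h : α → ℝ | LipschitzWith L h ∧ ∀ x, h x ∈ Icc u₁ u₂} := by
      have he : {h : α → ℝ | LipschitzWith L h ∧ ∀ x, h x ∈ Icc u₁ u₂}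
          = {h : α → ℝ | LipschitzWith L h} ∩ {h : α → ℝ | ∀ x, h x ∈ Icc u₁ u₂} := rfl
      rw [he]
      exact (isClosed_setOf_lipschitzWith L).inter h2closed
    exact (isCompact_univ_pi fun _ => isCompact_Icc).of_isClosed_subset hclosed hsub
  · apply Metric.equicontinuous_of_continuity_modulus (fun d => (L : ℝ) * d)
    · have : Continuous fun d : ℝ => (L : ℝ) * d := continuous_const.mul continuous_id
      simpa using this.tendsto 0
    · intro x y ⟨g, hg⟩
      exact hg.1.dist_le_mul x y

/-- Existence for the two-point problem `U' = γ b(U,·)/a(U,·)`, `U w₁ = u₁`, `U w₂ = u₂`,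
when `a, b` are continuous and positive on the rectangle `R = [u₁,u₂] × [w₁,w₂]`. -/
theorem stmt4 (w₁ w₂ u₁ u₂ : ℝ) (hw : w₁ < w₂) (hu : u₁ ≤ u₂)
    (a b : ℝ → ℝ → ℝ)
    (ha : ContinuousOn (fun p : ℝ × ℝ => a p.1 p.2) (Icc u₁ u₂ ×ˢ Icc w₁ w₂))
    (hb : ContinuousOn (fun p : ℝ × ℝ => b p.1 p.2) (Icc u₁ u₂ ×ˢ Icc w₁ w₂))
    (hapos : ∀ u ∈ Icc u₁ u₂, ∀ w ∈ Icc w₁ w₂, 0 < a u w)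
    (hbpos : ∀ u ∈ Icc u₁ u₂, ∀ w ∈ Icc w₁ w₂, 0 < b u w) :
    ∃ (γ : ℝ) (U : ℝ → ℝ),
      ContDiffOn ℝ 1 U (Icc w₁ w₂) ∧
      (∀ w ∈ Icc w₁ w₂, U w ∈ Icc u₁ u₂) ∧
      U w₁ = u₁ ∧ U w₂ = u₂ ∧
      ∀ w ∈ Icc w₁ w₂,
        HasDerivWithinAt U (γ * b (U w) w / a (U w) w) (Icc w₁ w₂) w := by
  obtain rfl | hult := eq_or_lt_of_le hu
  · refine ⟨0, fun _ => u₁, contDiffOn_const, fun w _ => ⟨le_refl _, le_refl _⟩, rfl, rfl, ?_⟩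
    intro w _
    rw [zero_mul, zero_div]
    exact hasDerivWithinAt_const w _ u₁
  -- main case : u₁ < u₂
  haveI hRcs : CompactSpace (Icc u₁ u₂ ×ˢ Icc w₁ w₂ : Set (ℝ × ℝ)) :=
    isCompact_iff_compactSpace.mp (isCompact_Icc.prod isCompact_Icc)
  haveI : Nonempty (Icc u₁ u₂ ×ˢ Icc w₁ w₂ : Set (ℝ × ℝ)) :=
    ⟨⟨(u₁, w₁), ⟨left_mem_Icc.2 hu, left_mem_Icc.2 hw.le⟩⟩⟩
  have hacont : Continuous fun p : (Icc u₁ u₂ ×ˢ Icc w₁ w₂ : Set (ℝ × ℝ)) =>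
      a (p : ℝ × ℝ).1 (p : ℝ × ℝ).2 := ha.restrict
  have hbcont : Continuous fun p : (Icc u₁ u₂ ×ˢ Icc w₁ w₂ : Set (ℝ × ℝ)) =>
      b (p : ℝ × ℝ).1 (p : ℝ × ℝ).2 := hb.restrict
  have hapos' : ∀ p : (Icc u₁ u₂ ×ˢ Icc w₁ w₂ : Set (ℝ × ℝ)),
      0 < a (p : ℝ × ℝ).1 (p : ℝ × ℝ).2 := fun p => hapos _ p.2.1 _ p.2.2
  have hbpos' : ∀ p : (Icc u₁ u₂ ×ˢ Icc w₁ w₂ : Set (ℝ × ℝ)),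
      0 < b (p : ℝ × ℝ).1 (p : ℝ × ℝ).2 := fun p => hbpos _ p.2.1 _ p.2.2
  set f0 : (Icc u₁ u₂ ×ˢ Icc w₁ w₂ : Set (ℝ × ℝ)) → ℝ :=
    fun p => b (p : ℝ × ℝ).1 (p : ℝ × ℝ).2 / a (p : ℝ × ℝ).1 (p : ℝ × ℝ).2 with hf0def
  have hf0cont : Continuous f0 := hbcont.div hacont fun p => (hapos' p).ne'
  have hf0pos : ∀ p, 0 < f0 p := fun p => div_pos (hbpos' p) (hapos' p)
  obtain ⟨pm, -, hpm'⟩ := isCompact_univ.exists_isMinOn univ_nonempty hf0cont.continuousOn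
  obtain ⟨pM, -, hpM'⟩ := isCompact_univ.exists_isMaxOn univ_nonempty hf0cont.continuousOn
  have hpm : ∀ y, f0 pm ≤ f0 y := fun y => hpm' (mem_univ y)
  have hpM : ∀ y, f0 y ≤ f0 pM := fun y => hpM' (mem_univ y)
  set m : ℝ := f0 pm with hmdef
  set M : ℝ := f0 pM with hMdef
  have hmpos : 0 < m := hf0pos pm
  have hmM : m ≤ M := hpm pM
  -- clamping maps
  set cu : ℝ → ℝ := fun x => max u₁ (min x u₂) with hcudef
  set cw : ℝ → ℝ := fun x => max w₁ (min x w₂) with hcwdef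
  have hcu_mem : ∀ x, cu x ∈ Icc u₁ u₂ :=
    fun x => ⟨le_max_left _ _, max_le hu (min_le_right _ _)⟩
  have hcw_mem : ∀ x, cw x ∈ Icc w₁ w₂ :=
    fun x => ⟨le_max_left _ _, max_le hw.le (min_le_right _ _)⟩
  have hcu_id : ∀ x ∈ Icc u₁ u₂, cu x = x := fun x hx => by
    rw [hcudef]; dsimp only; rw [min_eq_left hx.2, max_eq_right hx.1]
  have hcw_id : ∀ x ∈ Icc w₁ w₂, cw x = x := fun x hx => by
    rw [hcwdef]; dsimp only; rw [min_eq_left hx.2, max_eq_right hx.1]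
  have hculip : LipschitzWith 1 cu := by
    have := (LipschitzWith.id (α := ℝ)).min_const u₂
    simpa [hcudef] using this.const_max u₁
  have hcwlip : LipschitzWith 1 cw := by
    have := (LipschitzWith.id (α := ℝ)).min_const w₂
    simpa [hcwdef] using this.const_max w₁
  set cl : ℝ × ℝ → (Icc u₁ u₂ ×ˢ Icc w₁ w₂ : Set (ℝ × ℝ)) :=
    fun p => ⟨(cu p.1, cw p.2), ⟨hcu_mem _, hcw_mem _⟩⟩ with hcldef
  have hcllip : LipschitzWith 1 cl := by
    refine LipschitzWith.of_dist_le_mul fun p q => ?_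
    rw [NNReal.coe_one, one_mul, Subtype.dist_eq]
    rw [Prod.dist_eq, Prod.dist_eq]
    have h1 : dist (cu p.1) (cu q.1) ≤ dist p.1 q.1 := by
      simpa using hculip.dist_le_mul p.1 q.1
    have h2 : dist (cw p.2) (cw q.2) ≤ dist p.2 q.2 := by
      simpa using hcwlip.dist_le_mul p.2 q.2
    exact max_le_max h1 h2
  have hcl_id : ∀ u ∈ Icc u₁ u₂, ∀ w ∈ Icc w₁ w₂,
      ((cl (u, w) : (Icc u₁ u₂ ×ˢ Icc w₁ w₂ : Set (ℝ × ℝ))) : ℝ × ℝ) = (u, w) := by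
    intro u hu' w hw'
    rw [hcldef]; dsimp only
    rw [hcu_id u hu', hcw_id w hw']
  have hFunif : UniformContinuous fun p : ℝ × ℝ => f0 (cl p) :=
    (CompactSpace.uniformContinuous_of_continuous hf0cont).comp hcllip.uniformContinuous
  set Γmax : ℝ := (u₂ - u₁) / (m / 2 * (w₂ - w₁)) with hΓmaxdef
  have hΓmaxpos : 0 < Γmax :=
    div_pos (by linarith) (mul_pos (by linarith) (by linarith))
  set M' : ℝ := M + m with hM'def
  have hM'pos : 0 < M' := by linarith
  -- approximate problems
  have hmain : ∀ n : ℕ, ∃ (γ : ℝ) (U : ℝ → ℝ)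
      (g : (Icc u₁ u₂ ×ˢ Icc w₁ w₂ : Set (ℝ × ℝ)) → ℝ),
      Continuous g ∧
      (∀ x, |g x - f0 x| ≤ min (m / 2) (1 / ((n : ℝ) + 1))) ∧
      (∀ x, m / 2 ≤ g x) ∧ (∀ x, g x ≤ M') ∧
      0 ≤ γ ∧ γ ≤ Γmax ∧ U w₁ = u₁ ∧ U w₂ = u₂ ∧ MonotoneOn U (Icc w₁ w₂) ∧
      ∀ w ∈ Icc w₁ w₂, HasDerivWithinAt U (γ * g (cl (U w, w))) (Icc w₁ w₂) w := by
    intro n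
    have hεpos : 0 < min (m / 2) (1 / ((n : ℝ) + 1)) :=
      lt_min (by linarith) (by positivity)
    obtain ⟨K, g, hKlip, hgnear⟩ := lip_dense f0 hf0cont hεpos
    have hεm : min (m / 2) (1 / ((n : ℝ) + 1)) ≤ m / 2 := min_le_left _ _
    have hglb : ∀ x, m / 2 ≤ g x := by
      intro x
      have h1 := abs_le.1 (hgnear x)
      have h2 := hpm x
      linarith [h1.1]
    have hgub : ∀ x, g x ≤ M' := by
      intro x
      have h1 := abs_le.1 (hgnear x)
      have h2 := hpM x
      rw [hM'def]
      linarith [h1.2]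
    obtain ⟨γ, U, hγ0, hγle, hU1, hU2, hUmono, hUd⟩ :=
      solve_lipschitz w₁ w₂ u₁ u₂ hw hult (fun w u => g (cl (u, w))) (K * (1 * 1))
        (m / 2) M' (by linarith)
        (fun w => hKlip.comp (hcllip.comp (LipschitzWith.prodMk_right w)))
        (fun u => hKlip.continuous.comp
          (hcllip.continuous.comp (continuous_const.prodMk continuous_id)))
        (fun w u => hglb _) (fun w u => hgub _)
    exact ⟨γ, U, g, hKlip.continuous, hgnear, hglb, hgub, hγ0, hγle, hU1, hU2, hUmono, hUd⟩
  choose γn Un gn hgcont hgnear hglb hgub hγ0 hγle hU1 hU2 hUmono hUd using hmain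
  -- uniform Lipschitz bound on the Un
  set C0 : ℝ := Γmax * M' with hC0def
  have hC0nn : 0 ≤ C0 := le_of_lt (mul_pos hΓmaxpos hM'pos)
  have hkey : ∀ n, ∀ x ∈ Icc w₁ w₂, ∀ y ∈ Icc w₁ w₂, x ≤ y →
      |Un n y - Un n x| ≤ C0 * (y - x) := by
    intro n x hx y hy hxy
    have hbound : ∀ t ∈ Ico x w₂, ‖γn n * gn n (cl (Un n t, t))‖ ≤ C0 := by
      intro t _
      rw [Real.norm_eq_abs, abs_mul, abs_of_nonneg (hγ0 n),
        abs_of_pos (lt_of_lt_of_le (by linarith) (hglb n _))]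
      exact mul_le_mul (hγle n) (hgub n _) (le_trans (by linarith) (hglb n _)) hΓmaxpos.le
    have := norm_image_sub_le_of_norm_deriv_le_segment' (a := x) (b := w₂)
      (f := Un n) (f' := fun t => γn n * gn n (cl (Un n t, t))) (C := C0)
      (fun t ht => (hUd n t ⟨hx.1.trans ht.1, ht.2⟩).mono (Icc_subset_Icc hx.1 le_rfl))
      hbound y ⟨hxy, hy.2⟩
    simpa [Real.norm_eq_abs] using this
  have hUlip : ∀ n, LipschitzOnWith C0.toNNReal (Un n) (Icc w₁ w₂) := by
    intro n
    apply LipschitzOnWith.of_dist_le_mul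
    intro x hx y hy
    rw [Real.coe_toNNReal _ hC0nn, Real.dist_eq, Real.dist_eq]
    rcases le_total x y with h | h
    · have h1 : |x - y| = y - x := by rw [abs_sub_comm, abs_of_nonneg (by linarith)]
      rw [h1, abs_sub_comm]
      exact hkey n x hx y hy h
    · have h1 : |x - y| = x - y := abs_of_nonneg (by linarith)
      rw [h1]
      exact hkey n y hy x hx h
  have hUcontOn : ∀ n, ContinuousOn (Un n) (Icc w₁ w₂) := fun n => (hUlip n).continuousOn
  -- compactness argument
  haveI : CompactSpace (Icc w₁ w₂) := isCompact_iff_compactSpace.mp isCompact_Icc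
  set V : ℕ → C(Icc w₁ w₂, ℝ) := fun n => ⟨(Icc w₁ w₂).restrict (Un n),
    (lipschitzOnWith_iff_restrict.mp (hUlip n)).continuous⟩ with hVdef
  have hVmem : ∀ n, V n ∈ {g : C(Icc w₁ w₂, ℝ) |
      LipschitzWith C0.toNNReal g ∧ ∀ x, g x ∈ Icc u₁ u₂} := by
    intro n
    refine ⟨lipschitzOnWith_iff_restrict.mp (hUlip n), fun x => ?_⟩
    constructor
    · have := hUmono n (left_mem_Icc.2 hw.le) x.2 x.2.1
      rw [hU1 n] at this; exact this
    · have := hUmono n x.2 (right_mem_Icc.2 hw.le) x.2.2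
      rw [hU2 n] at this; exact this
  have hTcomp : IsCompact ((Icc (0:ℝ) Γmax) ×ˢ {g : C(Icc w₁ w₂, ℝ) |
      LipschitzWith C0.toNNReal g ∧ ∀ x, g x ∈ Icc u₁ u₂}) :=
    isCompact_Icc.prod (compact_S u₁ u₂ _)
  have hseqmem : ∀ n, ((γn n, V n) : ℝ × C(Icc w₁ w₂, ℝ)) ∈
      (Icc (0:ℝ) Γmax) ×ˢ {g : C(Icc w₁ w₂, ℝ) |
        LipschitzWith C0.toNNReal g ∧ ∀ x, g x ∈ Icc u₁ u₂} :=
    fun n => ⟨⟨hγ0 n, hγle n⟩, hVmem n⟩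
  obtain ⟨⟨γl, Vl⟩, hlimmem, ψ, hψmono, hψtend⟩ := hTcomp.tendsto_subseq hseqmem
  have hγtend : Filter.Tendsto (fun k => γn (ψ k)) Filter.atTop (nhds γl) :=
    (continuous_fst.tendsto _).comp hψtend
  have hVtend : Filter.Tendsto (fun k => V (ψ k)) Filter.atTop (nhds Vl) :=
    (continuous_snd.tendsto _).comp hψtend
  set Ul : ℝ → ℝ := fun w => Vl (projIcc w₁ w₂ hw.le w) with hUldef
  have hUlcont : Continuous Ul := Vl.continuous.comp continuous_projIcc
  have hUleq : ∀ w (hmem : w ∈ Icc w₁ w₂), Ul w = Vl ⟨w, hmem⟩ := by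
    intro w hmem
    rw [hUldef]; dsimp only; rw [projIcc_of_mem hw.le hmem]
  have hptconv : ∀ w (hmem : w ∈ Icc w₁ w₂),
      Filter.Tendsto (fun k => Un (ψ k) w) Filter.atTop (nhds (Ul w)) := by
    intro w hmem
    have h2 := ((continuous_eval_const (⟨w, hmem⟩ : Icc w₁ w₂)).tendsto Vl).comp hVtend
    rw [hUleq w hmem]
    exact h2
  -- integral identities
  have hcontInt : ∀ n, ContinuousOn (fun s => gn n (cl (Un n s, s))) (Icc w₁ w₂) := by
    intro n
    exact (hgcont n).comp_continuousOn
      (hcllip.continuous.comp_continuousOn ((hUcontOn n).prodMk continuousOn_id))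
  have hInt : ∀ n, ∀ w ∈ Icc w₁ w₂,
      Un n w = u₁ + γn n * ∫ s in w₁..w, gn n (cl (Un n s, s)) := by
    intro n w hmem
    have hle : w₁ ≤ w := hmem.1
    have hsub : Icc w₁ w ⊆ Icc w₁ w₂ := Icc_subset_Icc le_rfl hmem.2
    have hder : ∀ x ∈ Ioo w₁ w,
        HasDerivWithinAt (Un n) (γn n * gn n (cl (Un n x, x))) (Ioi x) x := by
      intro x hx
      refine (hUd n x (hsub (Ioo_subset_Icc_self hx))).mono_of_mem_nhdsWithin ?_
      have h1 : Ioc x w₂ ∈ nhdsWithin x (Ioi x) :=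
        Ioc_mem_nhdsGT_of_mem ⟨le_refl x, lt_of_lt_of_le hx.2 hmem.2⟩
      exact Filter.mem_of_superset h1 fun y hy => ⟨(hx.1.trans hy.1).le, hy.2⟩
    have hfint : IntervalIntegrable (fun s => γn n * gn n (cl (Un n s, s)))
        MeasureTheory.volume w₁ w := by
      apply ContinuousOn.intervalIntegrable
      rw [uIcc_of_le hle]
      exact continuousOn_const.mul ((hcontInt n).mono hsub)
    have hFTC := intervalIntegral.integral_eq_sub_of_hasDeriv_right_of_le hle
      ((hUcontOn n).mono hsub) hder hfint
    rw [intervalIntegral.integral_const_mul] at hFTC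
    rw [hU1 n] at hFTC
    linarith [hFTC]
  set gl : ℝ → ℝ := fun s => f0 (cl (Ul s, s)) with hgldef
  have hglcont : Continuous gl :=
    hf0cont.comp (hcllip.continuous.comp (hUlcont.prodMk continuous_id))
  -- limit of the integral identities
  have hIdent : ∀ w ∈ Icc w₁ w₂, Ul w = u₁ + γl * ∫ s in w₁..w, gl s := by
    intro w hmem
    have hInttend : Filter.Tendsto
        (fun k => ∫ s in w₁..w, gn (ψ k) (cl (Un (ψ k) s, s))) Filter.atTop
        (nhds (∫ s in w₁..w, gl s)) := by
      rw [Metric.tendsto_atTop]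
      intro ρ hρ
      set ρ' : ℝ := ρ / (2 * (w₂ - w₁) + 1) with hρ'def
      have hρ'pos : 0 < ρ' := div_pos hρ (by linarith)
      obtain ⟨η, hηpos, hη⟩ := Metric.uniformContinuous_iff.mp hFunif ρ' hρ'pos
      obtain ⟨N₁, hN₁⟩ := exists_nat_one_div_lt hρ'pos
      obtain ⟨N₂, hN₂⟩ := (Metric.tendsto_atTop.mp hVtend) η hηpos
      refine ⟨max N₁ N₂, fun k hk => ?_⟩
      have hk1 : N₁ ≤ k := le_trans (le_max_left _ _) hk
      have hk2 : N₂ ≤ k := le_trans (le_max_right _ _) hk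
      have hbnd : ∀ s ∈ Set.uIoc w₁ w,
          ‖gn (ψ k) (cl (Un (ψ k) s, s)) - gl s‖ ≤ ρ' + ρ' := by
        intro s hs
        have hsIcc : s ∈ Icc w₁ w₂ := by
          rw [uIoc_of_le hmem.1] at hs
          exact ⟨hs.1.le, hs.2.trans hmem.2⟩
        have h1 : |gn (ψ k) (cl (Un (ψ k) s, s)) - f0 (cl (Un (ψ k) s, s))| ≤ ρ' := by
          refine le_trans (hgnear (ψ k) _) (le_trans (min_le_right _ _) ?_)
          have hψk : (N₁ : ℝ) ≤ (ψ k : ℝ) := by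
            exact_mod_cast le_trans hk1 (hψmono.le_apply)
          have h3 : 1 / ((ψ k : ℝ) + 1) ≤ 1 / ((N₁ : ℝ) + 1) :=
            one_div_le_one_div_of_le (by positivity) (by linarith)
          linarith [hN₁]
        have h2 : |f0 (cl (Un (ψ k) s, s)) - f0 (cl (Ul s, s))| ≤ ρ' := by
          have hdist : dist ((Un (ψ k) s, s) : ℝ × ℝ) ((Ul s, s) : ℝ × ℝ) < η := by
            rw [Prod.dist_eq]
            have hVd : dist (V (ψ k)) Vl < η := hN₂ k hk2
            have h4 := ContinuousMap.dist_apply_le_dist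
              (f := V (ψ k)) (g := Vl) (⟨s, hsIcc⟩ : Icc w₁ w₂)
            rw [hUleq s hsIcc]
            simp only [dist_self]
            exact max_lt (lt_of_le_of_lt h4 hVd) hηpos
          have h5 := hη hdist
          rw [Real.dist_eq] at h5
          exact h5.le
        have h6 : gn (ψ k) (cl (Un (ψ k) s, s)) - gl s
            = (gn (ψ k) (cl (Un (ψ k) s, s)) - f0 (cl (Un (ψ k) s, s)))
              + (f0 (cl (Un (ψ k) s, s)) - f0 (cl (Ul s, s))) := by
          rw [hgldef]; ring
        rw [Real.norm_eq_abs, h6]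
        exact le_trans (abs_add_le _ _) (add_le_add h1 h2)
      have hint1 : IntervalIntegrable (fun s => gn (ψ k) (cl (Un (ψ k) s, s)))
          MeasureTheory.volume w₁ w := by
        apply ContinuousOn.intervalIntegrable
        rw [uIcc_of_le hmem.1]
        exact (hcontInt (ψ k)).mono (Icc_subset_Icc le_rfl hmem.2)
      have hint2 : IntervalIntegrable gl MeasureTheory.volume w₁ w :=
        hglcont.intervalIntegrable w₁ w
      have hsplit : (∫ s in w₁..w, gn (ψ k) (cl (Un (ψ k) s, s))) - ∫ s in w₁..w, gl s
          = ∫ s in w₁..w, (gn (ψ k) (cl (Un (ψ k) s, s)) - gl s) :=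
        (intervalIntegral.integral_sub hint1 hint2).symm
      have hnorm := intervalIntegral.norm_integral_le_of_norm_le_const hbnd
      rw [Real.norm_eq_abs,
        abs_of_nonneg (by linarith [hmem.1] : (0:ℝ) ≤ w - w₁)] at hnorm
      rw [Real.dist_eq, hsplit]
      calc |∫ s in w₁..w, (gn (ψ k) (cl (Un (ψ k) s, s)) - gl s)|
          ≤ (ρ' + ρ') * (w - w₁) := hnorm
        _ ≤ (ρ' + ρ') * (w₂ - w₁) := by
            apply mul_le_mul_of_nonneg_left (by linarith [hmem.2]) (by linarith)
        _ < ρ := by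
            rw [hρ'def]
            rw [← add_div, div_mul_eq_mul_div, div_lt_iff₀ (by linarith)]
            nlinarith [hρ, hmem.1, hmem.2]
    have hRHS : Filter.Tendsto
        (fun k => u₁ + γn (ψ k) * ∫ s in w₁..w, gn (ψ k) (cl (Un (ψ k) s, s)))
        Filter.atTop (nhds (u₁ + γl * ∫ s in w₁..w, gl s)) :=
      ((hγtend.mul hInttend).const_add u₁)
    have hLHS := hptconv w hmem
    have hcongr := hRHS.congr (fun k => (hInt (ψ k) w hmem).symm)
    exact tendsto_nhds_unique hLHS hcongr
  -- the final solution
  set Uf : ℝ → ℝ := fun w => u₁ + γl * ∫ s in w₁..w, gl s with hUfdef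
  have hUfeq : ∀ w ∈ Icc w₁ w₂, Uf w = Ul w := fun w hmem => (hIdent w hmem).symm
  have hderiv : ∀ w : ℝ, HasDerivAt Uf (γl * gl w) w := by
    intro w
    have h1 : HasStrictDerivAt (fun u => ∫ s in w₁..u, gl s) (gl w) w :=
      hglcont.integral_hasStrictDerivAt w₁ w
    exact (h1.hasDerivAt.const_mul γl).const_add u₁
  have hcd : ContDiff ℝ 1 Uf := by
    rw [contDiff_one_iff_deriv]
    constructor
    · exact fun w => (hderiv w).differentiableAt
    · have hde : deriv Uf = fun w => γl * gl w := funext fun w => (hderiv w).deriv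
      rw [hde]
      exact continuous_const.mul hglcont
  have hrange : ∀ w ∈ Icc w₁ w₂, Uf w ∈ Icc u₁ u₂ := by
    intro w hmem
    rw [hUfeq w hmem, hUleq w hmem]
    exact hlimmem.2.2 ⟨w, hmem⟩
  have hUfw₁ : Uf w₁ = u₁ := by
    rw [hUfdef]; dsimp only; rw [intervalIntegral.integral_same, mul_zero, add_zero]
  have hUfw₂ : Uf w₂ = u₂ := by
    rw [hUfeq w₂ (right_mem_Icc.2 hw.le)]
    have h1 := hptconv w₂ (right_mem_Icc.2 hw.le)
    have h2 : Filter.Tendsto (fun k => Un (ψ k) w₂) Filter.atTop (nhds u₂) := by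
      have hcn : Filter.Tendsto (fun _ : ℕ => u₂) Filter.atTop (nhds u₂) :=
        tendsto_const_nhds
      exact hcn.congr fun k => (hU2 (ψ k)).symm
    exact tendsto_nhds_unique h1 h2
  refine ⟨γl, Uf, hcd.contDiffOn, hrange, hUfw₁, hUfw₂, ?_⟩
  intro w hmem
  have hD := (hderiv w).hasDerivWithinAt (s := Icc w₁ w₂)
  have hUlmem : Ul w ∈ Icc u₁ u₂ := by
    rw [hUleq w hmem]; exact hlimmem.2.2 ⟨w, hmem⟩
  have hval : γl * gl w = γl * b (Uf w) w / a (Uf w) w := by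
    have hcleq : ((cl (Ul w, w) : (Icc u₁ u₂ ×ˢ Icc w₁ w₂ : Set (ℝ × ℝ))) : ℝ × ℝ)
        = (Ul w, w) := hcl_id _ hUlmem _ hmem
    have hmem' : ((Ul w, w) : ℝ × ℝ) ∈ Icc u₁ u₂ ×ˢ Icc w₁ w₂ := ⟨hUlmem, hmem⟩
    have hclsub : cl (Ul w, w) = ⟨(Ul w, w), hmem'⟩ := Subtype.ext hcleq
    have hglw : gl w = b (Ul w) w / a (Ul w) w := by
      show f0 (cl (Ul w, w)) = _
      rw [hclsub]
    rw [hglw, hUfeq w hmem, mul_div_assoc]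
  rw [← hval]
  exact hD
end

section
/- Let w₁ < w₂ and u₁ ≤ u₂, R = [u₁, u₂] × [w₁, w₂]. Let a, b : R → ℝ be continuous with a(u, w) > 0 and b(u, w) > 0 on R, and suppose the quotient F(U, w) = b(U, w)/a(U, w) satisfies a Lipschitz condition in U on R, i.e. there is L ≥ 0 with |F(U, w) − F(V, w)| ≤ L|U − V| for all (U, w), (V, w) ∈ R. If (γ₁, U₁) and (γ₂, U₂) are pairs with γᵢ ∈ ℝ, Uᵢ : [w₁, w₂] → [u₁, u₂] continuously differentiable, Uᵢ(w₁) = u₁, Uᵢ(w₂) = u₂, and Uᵢ'(w) = γᵢ b(Uᵢ(w), w)/a(Uᵢ(w), w) for all w ∈ [w₁, w₂], then γ₁ = γ₂ and U₁ = U₂ on [w₁, w₂]. -/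
open Set Filter Real

private lemma deriv_Ici_of_Icc {f : ℝ → ℝ} {d w₁ w₂ x : ℝ} (hx : x ∈ Ico w₁ w₂)
    (h : HasDerivWithinAt f d (Icc w₁ w₂) x) : HasDerivWithinAt f d (Ici x) x :=
  h.mono_of_mem_nhdsWithin (Icc_mem_nhdsGE_of_mem ⟨hx.1, hx.2⟩)

private lemma slope_tendsto_right {f : ℝ → ℝ} {d w₁ w₂ x : ℝ} (hx : x ∈ Ico w₁ w₂)
    (h : HasDerivWithinAt f d (Icc w₁ w₂) x) :
    Filter.Tendsto (slope f x) (nhdsWithin x (Ioi x)) (nhds d) := by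
  have h1 := hasDerivWithinAt_iff_tendsto_slope.1 h
  refine h1.mono_left (nhdsWithin_le_of_mem ?_)
  refine Filter.mem_of_superset (Ioc_mem_nhdsGT_of_mem ⟨le_refl x, hx.2⟩) ?_
  intro z hz
  exact ⟨⟨hx.1.trans hz.1.le, hz.2⟩, (ne_of_gt hz.1)⟩

/-- Key comparison lemma: if `γ₁ ≤ γ₂`, two solutions agree at both endpoints,
then `γ₁ = γ₂`. -/
private lemma key_gamma (w₁ w₂ u₁ u₂ : ℝ) (hw : w₁ < w₂)
    (F : ℝ → ℝ → ℝ) (m : ℝ) (hm : 0 < m)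
    (hFm : ∀ u ∈ Icc u₁ u₂, ∀ w ∈ Icc w₁ w₂, m ≤ F u w)
    (L : ℝ) (hL : 0 ≤ L)
    (hLip : ∀ w ∈ Icc w₁ w₂, ∀ U ∈ Icc u₁ u₂, ∀ V ∈ Icc u₁ u₂,
      |F U w - F V w| ≤ L * |U - V|)
    (γ₁ γ₂ : ℝ) (hγ : γ₁ ≤ γ₂)
    (U₁ U₂ : ℝ → ℝ)
    (c₁ : ContinuousOn U₁ (Icc w₁ w₂)) (c₂ : ContinuousOn U₂ (Icc w₁ w₂))
    (m₁ : ∀ w ∈ Icc w₁ w₂, U₁ w ∈ Icc u₁ u₂) (m₂ : ∀ w ∈ Icc w₁ w₂, U₂ w ∈ Icc u₁ u₂)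
    (e₁ : U₁ w₁ = U₂ w₁) (e₂ : U₁ w₂ = U₂ w₂)
    (ode₁ : ∀ w ∈ Icc w₁ w₂, HasDerivWithinAt U₁ (γ₁ * F (U₁ w) w) (Icc w₁ w₂) w)
    (ode₂ : ∀ w ∈ Icc w₁ w₂, HasDerivWithinAt U₂ (γ₂ * F (U₂ w) w) (Icc w₁ w₂) w) :
    γ₁ = γ₂ := by
  set K : ℝ := |γ₂| * L with hKdef
  have hK : 0 ≤ K := mul_nonneg (abs_nonneg _) hL
  set δ : ℝ := γ₂ - γ₁ with hδdef
  have hδ : 0 ≤ δ := by simp [hδdef]; linarith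
  set h : ℝ → ℝ := fun w => U₂ w - U₁ w with hhdef
  set h' : ℝ → ℝ := fun w => γ₂ * F (U₂ w) w - γ₁ * F (U₁ w) w with hh'def
  have hd : ∀ w ∈ Icc w₁ w₂, HasDerivWithinAt h (h' w) (Icc w₁ w₂) w :=
    fun w hww => (ode₂ w hww).sub (ode₁ w hww)
  have hch : ContinuousOn h (Icc w₁ w₂) := c₂.sub c₁
  have hw1 : h w₁ = 0 := by simp [hhdef, e₁]
  have hw2 : h w₂ = 0 := by simp [hhdef, e₂]
  -- lower bound on the derivative
  have hlow : ∀ w ∈ Icc w₁ w₂, δ * m - K * |h w| ≤ h' w := by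
    intro w hww
    have hFlip := hLip w hww (U₂ w) (m₂ w hww) (U₁ w) (m₁ w hww)
    have hF1 : m ≤ F (U₁ w) w := hFm _ (m₁ w hww) _ hww
    have habs : |γ₂ * (F (U₂ w) w - F (U₁ w) w)| ≤ |γ₂| * (L * |U₂ w - U₁ w|) := by
      rw [abs_mul]
      exact mul_le_mul_of_nonneg_left hFlip (abs_nonneg _)
    have hA : -(K * |h w|) ≤ γ₂ * (F (U₂ w) w - F (U₁ w) w) := by
      have := neg_abs_le (γ₂ * (F (U₂ w) w - F (U₁ w) w))
      have hKh : K * |h w| = |γ₂| * (L * |U₂ w - U₁ w|) := by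
        simp only [hKdef, hhdef]; ring
      linarith
    have hB : δ * m ≤ δ * F (U₁ w) w := mul_le_mul_of_nonneg_left hF1 hδ
    have hid : h' w = γ₂ * (F (U₂ w) w - F (U₁ w) w) + δ * F (U₁ w) w := by
      simp only [hh'def, hδdef]; ring
    linarith
  -- Step A : h ≥ 0 on [w₁, w₂]
  have hpos : ∀ w ∈ Icc w₁ w₂, 0 ≤ h w := by
    set f : ℝ → ℝ := fun w => max (-h w) 0 with hfdef
    set f' : ℝ → ℝ := fun w => if h w ≤ 0 then max (-h' w) 0 else 0 with hf'def
    have hf0 : ∀ x ∈ Icc w₁ w₂, f x ≤ gronwallBound 0 K 0 (x - w₁) := by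
      apply le_gronwallBound_of_liminf_deriv_right_le (f' := f')
      · exact (continuous_id.neg.max continuous_const).comp_continuousOn hch
      · intro x hx r hr
        by_cases hhx : h x ≤ 0
        · simp only [hf'def, if_pos hhx] at hr
          have hslope := slope_tendsto_right hx (hd x (Ico_subset_Icc_self hx))
          have htt : Filter.Tendsto (fun z => max (-(slope h x z)) 0) (nhdsWithin x (Ioi x))
              (nhds (max (-h' x) 0)) := (hslope.neg).max tendsto_const_nhds
          have hev : ∀ᶠ z in nhdsWithin x (Ioi x), max (-(slope h x z)) 0 < r :=
            htt.eventually (Filter.Tendsto.eventually_lt_const hr tendsto_id)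
          have hev2 : ∀ᶠ z in nhdsWithin x (Ioi x), (z - x)⁻¹ * (f z - f x) < r := by
            filter_upwards [hev, self_mem_nhdsWithin] with z h1 h2
            refine lt_of_le_of_lt ?_ h1
            have hzx : (0:ℝ) < z - x := sub_pos.2 h2
            have hfd : f z - f x ≤ max (-(h z - h x)) 0 := by
              have hfx : f x = -h x := max_eq_left (neg_nonneg.2 hhx)
              have hmax0 : (0:ℝ) ≤ max (-(h z - h x)) 0 := le_max_right _ _
              have hmax1 : -(h z - h x) ≤ max (-(h z - h x)) 0 := le_max_left _ _
              have hfz : f z ≤ max (-(h z - h x)) 0 + -h x := by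
                rcases le_total (-(h z)) 0 with hc | hc
                · have h1 : f z = 0 := max_eq_right hc
                  rw [h1]; linarith
                · have h1 : f z = -(h z) := max_eq_left hc
                  rw [h1]; linarith
              linarith [hfx, hfz]
            calc (z - x)⁻¹ * (f z - f x) ≤ (z - x)⁻¹ * max (-(h z - h x)) 0 :=
                  mul_le_mul_of_nonneg_left hfd (inv_nonneg.2 hzx.le)
              _ = max ((z - x)⁻¹ * -(h z - h x)) ((z - x)⁻¹ * 0) :=
                  mul_max_of_nonneg _ _ (inv_nonneg.2 hzx.le)
              _ = max (-(slope h x z)) 0 := by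
                  rw [mul_zero]
                  congr 1
                  rw [slope_def_field, div_eq_inv_mul]
                  ring
          exact hev2.frequently
        · simp only [hf'def, if_neg hhx] at hr
          push_neg at hhx
          have hcont : ContinuousWithinAt h (Ioi x) x := by
            refine (hch x (Ico_subset_Icc_self hx)).mono_of_mem_nhdsWithin ?_
            refine Filter.mem_of_superset (Ioc_mem_nhdsGT_of_mem ⟨le_refl x, hx.2⟩) ?_
            exact fun z hz => ⟨hx.1.trans hz.1.le, hz.2⟩
          have hev : ∀ᶠ z in nhdsWithin x (Ioi x), 0 < h z :=
            hcont.eventually_const_lt hhx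
          have hev2 : ∀ᶠ z in nhdsWithin x (Ioi x), (z - x)⁻¹ * (f z - f x) < r := by
            filter_upwards [hev] with z h1
            have hfz : f z = 0 := max_eq_right (by linarith)
            have hfx : f x = 0 := max_eq_right (by linarith)
            simp [hfz, hfx, hr]
          exact hev2.frequently
      · simp [hfdef, hw1]
      · intro x hx
        have hf_nonneg : 0 ≤ f x := le_max_right _ _
        by_cases hhx : h x ≤ 0
        · simp only [hf'def, if_pos hhx]
          have hfx : f x = -h x := max_eq_left (neg_nonneg.2 hhx)
          have h1 := hlow x (Ico_subset_Icc_self hx)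
          have h2 : |h x| = -h x := abs_of_nonpos hhx
          refine max_le ?_ (by nlinarith)
          have hdm : 0 ≤ δ * m := mul_nonneg hδ hm.le
          rw [hfx]; linarith [h1, h2.symm ▸ h1]
        · simp only [hf'def, if_neg hhx]
          nlinarith
    intro w hww
    have h1 := hf0 w hww
    rw [gronwallBound_ε0_δ0] at h1
    have h2 : -h w ≤ f w := le_max_left _ _
    linarith
  -- Step B : δ = 0 via reversed-time Grönwall
  have hδ0 : δ ≤ 0 := by
    set q : ℝ → ℝ := fun t => h (w₁ + w₂ - t) with hqdef
    set q' : ℝ → ℝ := fun t => -h' (w₁ + w₂ - t) with hq'def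
    have hmaps : MapsTo (fun t : ℝ => w₁ + w₂ - t) (Icc w₁ w₂) (Icc w₁ w₂) := by
      intro z hz
      simp only [mem_Icc] at hz ⊢
      constructor <;> linarith [hz.1, hz.2]
    have hq : ∀ t ∈ Icc w₁ w₂, HasDerivWithinAt q (q' t) (Icc w₁ w₂) t := by
      intro t ht
      have hs : w₁ + w₂ - t ∈ Icc w₁ w₂ := hmaps ht
      have inner : HasDerivWithinAt (fun t : ℝ => w₁ + w₂ - t) (-1) (Icc w₁ w₂) t :=
        ((hasDerivAt_id t).const_sub (w₁ + w₂)).hasDerivWithinAt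
      have comp := (hd _ hs).comp t inner hmaps
      simpa [hqdef, hq'def, Function.comp_def] using comp
    have hq0 : ∀ x ∈ Icc w₁ w₂, q x ≤ gronwallBound 0 K (-(δ * m)) (x - w₁) := by
      apply le_gronwallBound_of_liminf_deriv_right_le (f' := q')
      · exact hch.comp (by fun_prop) hmaps
      · intro x hx r hr
        have h1 := (slope_tendsto_right hx (hq x (Ico_subset_Icc_self hx))).eventually
          (Filter.Tendsto.eventually_lt_const hr tendsto_id)
        refine (h1.mono fun z hz => ?_).frequently
        rwa [slope_def_field, div_eq_inv_mul] at hz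
      · simp [hqdef, hw2]
      · intro x hx
        have hs : w₁ + w₂ - x ∈ Icc w₁ w₂ := hmaps (Ico_subset_Icc_self hx)
        have h1 := hlow _ hs
        have h2 : |h (w₁ + w₂ - x)| = h (w₁ + w₂ - x) := abs_of_nonneg (hpos _ hs)
        simp only [hq'def, hqdef]
        rw [h2] at h1
        linarith
    have hend := hq0 w₂ (right_mem_Icc.2 hw.le)
    have hqw2 : q w₂ = 0 := by simp [hqdef, hw1]
    rw [hqw2] at hend
    by_cases hK0 : K = 0
    · rw [hK0] at hend
      rw [gronwallBound_K0] at hend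
      simp only [zero_add] at hend
      by_contra hcon
      push_neg at hcon
      nlinarith [mul_pos (mul_pos hcon hm) (sub_pos.2 hw)]
    · rw [gronwallBound_of_K_ne_0 hK0] at hend
      have hKpos : 0 < K := lt_of_le_of_ne hK (Ne.symm hK0)
      have hexp : 1 < Real.exp (K * (w₂ - w₁)) := by
        rw [Real.one_lt_exp_iff]
        nlinarith
      simp only [zero_mul, zero_add] at hend
      have h3 : 0 < Real.exp (K * (w₂ - w₁)) - 1 := by linarith
      have h4 : -(δ * m) / K * (Real.exp (K * (w₂ - w₁)) - 1) < 0 → False := by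
        intro hcon; linarith
      by_contra hcon
      push_neg at hcon
      apply h4
      apply mul_neg_of_neg_of_pos _ h3
      apply div_neg_of_neg_of_pos _ hKpos
      nlinarith
  linarith [hδ, hδ0, hδdef]

/-- Uniqueness for the two-point problem `U' = γ b(U,·)/a(U,·)`, `U w₁ = u₁`, `U w₂ = u₂`,
when `a, b` are continuous and positive on `R = [u₁,u₂] × [w₁,w₂]` and the quotient
`b/a` is Lipschitz in `U` uniformly in `w`. -/
theorem stmt5 (w₁ w₂ u₁ u₂ : ℝ) (hw : w₁ < w₂) (hu : u₁ ≤ u₂)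
    (a b : ℝ → ℝ → ℝ)
    (ha : ContinuousOn (fun p : ℝ × ℝ => a p.1 p.2) (Icc u₁ u₂ ×ˢ Icc w₁ w₂))
    (hb : ContinuousOn (fun p : ℝ × ℝ => b p.1 p.2) (Icc u₁ u₂ ×ˢ Icc w₁ w₂))
    (hapos : ∀ u ∈ Icc u₁ u₂, ∀ w ∈ Icc w₁ w₂, 0 < a u w)
    (hbpos : ∀ u ∈ Icc u₁ u₂, ∀ w ∈ Icc w₁ w₂, 0 < b u w)
    (L : ℝ) (hL : 0 ≤ L)
    (hLip : ∀ w ∈ Icc w₁ w₂, ∀ U ∈ Icc u₁ u₂, ∀ V ∈ Icc u₁ u₂,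
      |b U w / a U w - b V w / a V w| ≤ L * |U - V|)
    (γ₁ γ₂ : ℝ) (U₁ U₂ : ℝ → ℝ)
    (hU₁C1 : ContDiffOn ℝ 1 U₁ (Icc w₁ w₂))
    (hU₂C1 : ContDiffOn ℝ 1 U₂ (Icc w₁ w₂))
    (hU₁mem : ∀ w ∈ Icc w₁ w₂, U₁ w ∈ Icc u₁ u₂)
    (hU₂mem : ∀ w ∈ Icc w₁ w₂, U₂ w ∈ Icc u₁ u₂)
    (hU₁a : U₁ w₁ = u₁) (hU₁b : U₁ w₂ = u₂)
    (hU₂a : U₂ w₁ = u₁) (hU₂b : U₂ w₂ = u₂)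
    (hU₁ode : ∀ w ∈ Icc w₁ w₂,
      HasDerivWithinAt U₁ (γ₁ * b (U₁ w) w / a (U₁ w) w) (Icc w₁ w₂) w)
    (hU₂ode : ∀ w ∈ Icc w₁ w₂,
      HasDerivWithinAt U₂ (γ₂ * b (U₂ w) w / a (U₂ w) w) (Icc w₁ w₂) w) :
    γ₁ = γ₂ ∧ ∀ w ∈ Icc w₁ w₂, U₁ w = U₂ w := by
  set F : ℝ → ℝ → ℝ := fun u w => b u w / a u w with hFdef
  -- continuity of F on R and existence of positive min
  have hRne : (Icc u₁ u₂ ×ˢ Icc w₁ w₂ : Set (ℝ × ℝ)).Nonempty :=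
    ⟨(u₁, w₁), ⟨left_mem_Icc.2 hu, left_mem_Icc.2 hw.le⟩⟩
  have hRcomp : IsCompact (Icc u₁ u₂ ×ˢ Icc w₁ w₂ : Set (ℝ × ℝ)) :=
    (isCompact_Icc).prod isCompact_Icc
  have hFcont : ContinuousOn (fun p : ℝ × ℝ => F p.1 p.2) (Icc u₁ u₂ ×ˢ Icc w₁ w₂) :=
    hb.div ha (fun p hp => (hapos _ hp.1 _ hp.2).ne')
  obtain ⟨p, hpR, hpmin⟩ := hRcomp.exists_isMinOn hRne hFcont
  set m : ℝ := F p.1 p.2 with hmdef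
  have hm : 0 < m := div_pos (hbpos _ hpR.1 _ hpR.2) (hapos _ hpR.1 _ hpR.2)
  have hFm : ∀ u ∈ Icc u₁ u₂, ∀ w ∈ Icc w₁ w₂, m ≤ F u w := by
    intro u hu' w hw'
    exact hpmin (show ((u, w) : ℝ × ℝ) ∈ Icc u₁ u₂ ×ˢ Icc w₁ w₂ from ⟨hu', hw'⟩)
  have ode₁ : ∀ w ∈ Icc w₁ w₂, HasDerivWithinAt U₁ (γ₁ * F (U₁ w) w) (Icc w₁ w₂) w := by
    intro w hww
    have := hU₁ode w hww
    rwa [mul_div_assoc] at this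
  have ode₂ : ∀ w ∈ Icc w₁ w₂, HasDerivWithinAt U₂ (γ₂ * F (U₂ w) w) (Icc w₁ w₂) w := by
    intro w hww
    have := hU₂ode w hww
    rwa [mul_div_assoc] at this
  have c₁ : ContinuousOn U₁ (Icc w₁ w₂) := hU₁C1.continuousOn
  have c₂ : ContinuousOn U₂ (Icc w₁ w₂) := hU₂C1.continuousOn
  have e₁ : U₁ w₁ = U₂ w₁ := by rw [hU₁a, hU₂a]
  have e₂ : U₁ w₂ = U₂ w₂ := by rw [hU₁b, hU₂b]
  have γeq : γ₁ = γ₂ := by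
    rcases le_total γ₁ γ₂ with hle | hle
    · exact key_gamma w₁ w₂ u₁ u₂ hw F m hm hFm L hL hLip γ₁ γ₂ hle U₁ U₂ c₁ c₂
        hU₁mem hU₂mem e₁ e₂ ode₁ ode₂
    · exact (key_gamma w₁ w₂ u₁ u₂ hw F m hm hFm L hL hLip γ₂ γ₁ hle U₂ U₁ c₂ c₁
        hU₂mem hU₁mem e₁.symm e₂.symm ode₂ ode₁).symm
  refine ⟨γeq, ?_⟩
  -- uniqueness of the solution via Grönwall
  set K : ℝ := |γ₁| * L with hKdef
  have hzero : ∀ t ∈ Icc w₁ w₂,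
      ‖U₁ t - U₂ t‖ ≤ gronwallBound 0 K 0 (t - w₁) := by
    apply norm_le_gronwallBound_of_norm_deriv_right_le
      (f' := fun t => γ₁ * F (U₁ t) t - γ₁ * F (U₂ t) t)
    · exact c₁.sub c₂
    · intro t ht
      have h1 := (ode₁ t (Ico_subset_Icc_self ht)).sub (ode₂ t (Ico_subset_Icc_self ht))
      rw [γeq] at h1 ⊢
      exact deriv_Ici_of_Icc ht h1
    · simp [e₁]
    · intro t ht
      have htI := Ico_subset_Icc_self ht
      have hFlip := hLip t htI (U₁ t) (hU₁mem t htI) (U₂ t) (hU₂mem t htI)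
      have : ‖γ₁ * F (U₁ t) t - γ₁ * F (U₂ t) t‖ = |γ₁| * |F (U₁ t) t - F (U₂ t) t| := by
        rw [Real.norm_eq_abs, ← abs_mul]; ring_nf
      rw [this, Real.norm_eq_abs, add_zero, hKdef]
      calc |γ₁| * |F (U₁ t) t - F (U₂ t) t| ≤ |γ₁| * (L * |U₁ t - U₂ t|) :=
            mul_le_mul_of_nonneg_left hFlip (abs_nonneg _)
        _ = |γ₁| * L * |U₁ t - U₂ t| := by ring
  intro w hww
  have h1 := hzero w hww
  rw [gronwallBound_ε0_δ0] at h1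
  have h2 : 0 ≤ ‖U₁ w - U₂ w‖ := norm_nonneg _
  have : U₁ w - U₂ w = 0 := norm_eq_zero.1 (le_antisymm h1 h2)
  linarith
end
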